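/- Let $G > 0$, $d, p \in \mathbb{N}$, and $\mathbf{x} \in \mathbb{R}^d$ with $\|\mathbf{x}\|_2 \le G$. Define the random vector $\widehat{\mathbf{x}} = d \tilde{x}_{i_S} \mathbf{e}_{i_S}$, where $i_S$ is uniform on $\{1,\dots,d\}$, and independently each $\tilde{x}_i$ satisfies $\mathbb{E}[\tilde{x}_i] = x_i$ and $(x_i - \tilde{x}_i)^2 \le 2^{-2p} G^2$ almost surely. Then $\mathbb{E}[\widehat{\mathbf{x}}] = \mathbf{x}$ and $\mathbb{E}[\|\mathbf{x} - \widehat{\mathbf{x}}\|^2] \le 2d\|\mathbf{x}\|^2 + d^2 2^{-2p} G^2$. -/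

import Mathlib

open MeasureTheory ProbabilityTheory

theorem stmt12 {Ω : Type*} [MeasurableSpace Ω] (μ : Measure Ω) [IsProbabilityMeasure μ]
    (d p : ℕ) (hd : 0 < d) (G : ℝ) (hG : 0 < G)
    (x : EuclideanSpace ℝ (Fin d)) (hx : ‖x‖ ≤ G)
    (iS : Ω → Fin d) (tilde : Ω → Fin d → ℝ)
    (hmeas_iS : Measurable iS) (hmeas_tilde : Measurable tilde)
    (huniform : ∀ i, μ {ω | iS ω = i} = 1 / d)
    (hindep : IndepFun iS tilde μ)
    (hint : ∀ i, Integrable (fun ω => tilde ω i) μ)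
    (hmean : ∀ i, ∫ ω, tilde ω i ∂μ = x i)
    (herr : ∀ i, ∀ᵐ ω ∂μ, (x i - tilde ω i) ^ 2 ≤ (2 : ℝ) ^ (-(2 * p : ℤ)) * G ^ 2) :
    (∀ i, ∫ ω, (EuclideanSpace.single (iS ω) ((d : ℝ) * tilde ω (iS ω)) :
        EuclideanSpace ℝ (Fin d)) i ∂μ = x i) ∧
    ∫ ω, ‖x - (EuclideanSpace.single (iS ω) ((d : ℝ) * tilde ω (iS ω)) :
        EuclideanSpace ℝ (Fin d))‖ ^ 2 ∂μ
      ≤ 2 * d * ‖x‖ ^ 2 + (d : ℝ) ^ 2 * (2 : ℝ) ^ (-(2 * p : ℤ)) * G ^ 2 := by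
  have hd0 : (d : ℝ) ≠ 0 := Nat.cast_ne_zero.mpr hd.ne'
  set ε : ℝ := (2 : ℝ) ^ (-(2 * p : ℤ)) * G ^ 2 with hεdef
  have hε0 : 0 ≤ ε := by positivity
  have hmt : ∀ i, Measurable fun ω => tilde ω i :=
    fun i => (measurable_pi_apply i).comp hmeas_tilde
  have hint2 : ∀ i, Integrable (fun ω => (x i - tilde ω i) ^ 2) μ := by
    intro i
    apply Integrable.mono' (integrable_const ε)
    · exact (((measurable_const.sub (hmt i)).pow_const 2)).aestronglyMeasurable
    · filter_upwards [herr i] with ω h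
      rwa [Real.norm_eq_abs, abs_of_nonneg (sq_nonneg _)]
  have hiu2 : ∀ i, ∫ ω, (x i - tilde ω i) ^ 2 ∂μ ≤ ε := by
    intro i
    calc ∫ ω, (x i - tilde ω i) ^ 2 ∂μ ≤ ∫ _, ε ∂μ :=
          integral_mono_ae (hint2 i) (integrable_const ε) (herr i)
      _ = ε := by simp
  have hiu : ∀ i, ∫ ω, (x i - tilde ω i) ∂μ = 0 := by
    intro i
    rw [integral_sub (integrable_const _) (hint i), hmean i, integral_const]
    simp
  have key : ∀ (i : Fin d) (ψ : (Fin d → ℝ) → ℝ), Measurable ψ →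
      Integrable (fun ω => ψ (tilde ω)) μ →
      ∫ ω, (if iS ω = i then (1 : ℝ) else 0) * ψ (tilde ω) ∂μ
        = (1 / d : ℝ) * ∫ ω, ψ (tilde ω) ∂μ := by
    intro i ψ hψ hψint
    have hφ : Measurable (fun j : Fin d => if j = i then (1 : ℝ) else 0) :=
      measurable_of_countable _
    have hXY : IndepFun (fun ω => if iS ω = i then (1 : ℝ) else 0)
        (fun ω => ψ (tilde ω)) μ := by
      have := hindep.comp hφ hψ
      simpa [Function.comp_def] using this
    have hχint : Integrable (fun ω => if iS ω = i then (1 : ℝ) else 0) μ := by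
      apply Integrable.mono' (integrable_const 1)
      · exact (hφ.comp hmeas_iS).aestronglyMeasurable
      · filter_upwards with ω; by_cases h : iS ω = i <;> simp [h]
    have hprod := hXY.integral_fun_mul_eq_mul_integral hχint.aestronglyMeasurable hψint.aestronglyMeasurable
    have hχ : ∫ ω, (if iS ω = i then (1 : ℝ) else 0) ∂μ = 1 / d := by
      have heq : (fun ω => if iS ω = i then (1 : ℝ) else 0)
          = Set.indicator {ω | iS ω = i} (fun _ => (1 : ℝ)) := by
        ext ω; by_cases h : iS ω = i <;> simp [h, Set.indicator]
      have hms : MeasurableSet {ω | iS ω = i} := hmeas_iS (measurableSet_singleton i)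
      rw [heq, integral_indicator_const _ hms, measureReal_def, huniform i]
      simp [ENNReal.toReal_div]
    calc ∫ ω, (if iS ω = i then (1 : ℝ) else 0) * ψ (tilde ω) ∂μ
        = (∫ ω, (if iS ω = i then (1 : ℝ) else 0) ∂μ) * ∫ ω, ψ (tilde ω) ∂μ := hprod
      _ = (1 / d : ℝ) * ∫ ω, ψ (tilde ω) ∂μ := by rw [hχ]
  have hnormsq : ∀ y : EuclideanSpace ℝ (Fin d), ‖y‖ ^ 2 = ∑ j, (y j) ^ 2 := by
    intro y
    rw [EuclideanSpace.norm_eq, Real.sq_sqrt (by positivity)]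
    simp [Real.norm_eq_abs, sq_abs]
  constructor
  · intro i
    have hpt : ∀ ω, (EuclideanSpace.single (iS ω) ((d : ℝ) * tilde ω (iS ω)) :
        EuclideanSpace ℝ (Fin d)) i
        = (if iS ω = i then (1 : ℝ) else 0) * ((d : ℝ) * tilde ω i) := by
      intro ω
      rw [EuclideanSpace.single_apply]
      by_cases h : iS ω = i
      · subst h; simp
      · simp [h, Ne.symm h]
    calc ∫ ω, (EuclideanSpace.single (iS ω) ((d : ℝ) * tilde ω (iS ω)) :
            EuclideanSpace ℝ (Fin d)) i ∂μ
        = ∫ ω, (if iS ω = i then (1 : ℝ) else 0) * ((d : ℝ) * tilde ω i) ∂μ :=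
          integral_congr_ae (Filter.Eventually.of_forall hpt)
      _ = (1 / d : ℝ) * ∫ ω, (d : ℝ) * tilde ω i ∂μ :=
          key i (fun t => (d : ℝ) * t i) (measurable_const.mul (measurable_pi_apply i))
            ((hint i).const_mul _)
      _ = x i := by
          rw [integral_const_mul, hmean i]
          field_simp
  · set g : Fin d → Ω → ℝ := fun i ω => ‖x‖ ^ 2 - x i ^ 2 + (x i - (d : ℝ) * tilde ω i) ^ 2
      with hg
    have hψmeas : ∀ i, Measurable (fun t : Fin d → ℝ =>
        ‖x‖ ^ 2 - x i ^ 2 + (x i - (d : ℝ) * t i) ^ 2) := fun i =>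
      measurable_const.add
        ((measurable_const.sub (measurable_const.mul (measurable_pi_apply i))).pow_const 2)
    have hsqint : ∀ i, Integrable (fun ω => (x i - (d : ℝ) * tilde ω i) ^ 2) μ := by
      intro i
      have hexp : (fun ω => (x i - (d : ℝ) * tilde ω i) ^ 2)
          = fun ω => (((1 - (d : ℝ)) * x i) ^ 2
              + (2 * (1 - (d : ℝ)) * x i * d) * (x i - tilde ω i))
              + (d : ℝ) ^ 2 * (x i - tilde ω i) ^ 2 := by
        funext ω; ring
      rw [hexp]
      exact ((integrable_const _).add
        (((integrable_const _).sub (hint i)).const_mul _)).add ((hint2 i).const_mul _)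
    have hgint : ∀ i, Integrable (g i) μ :=
      fun i => (integrable_const _).add (hsqint i)
    have hsqbound : ∀ i, ∫ ω, (x i - (d : ℝ) * tilde ω i) ^ 2 ∂μ
        ≤ ((1 - (d : ℝ)) * x i) ^ 2 + (d : ℝ) ^ 2 * ε := by
      intro i
      have hexp : (fun ω => (x i - (d : ℝ) * tilde ω i) ^ 2)
          = fun ω => (((1 - (d : ℝ)) * x i) ^ 2
              + (2 * (1 - (d : ℝ)) * x i * d) * (x i - tilde ω i))
              + (d : ℝ) ^ 2 * (x i - tilde ω i) ^ 2 := by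
        funext ω; ring
      have hI1 : Integrable (fun ω => 2 * (1 - (d : ℝ)) * x i * (d : ℝ) * (x i - tilde ω i)) μ :=
        ((integrable_const (x i)).sub (hint i)).const_mul _
      have hI0 : Integrable (fun ω => ((1 - (d : ℝ)) * x i) ^ 2
          + 2 * (1 - (d : ℝ)) * x i * (d : ℝ) * (x i - tilde ω i)) μ :=
        (integrable_const _).add hI1
      have hI2 : Integrable (fun ω => (d : ℝ) ^ 2 * (x i - tilde ω i) ^ 2) μ :=
        (hint2 i).const_mul _
      rw [hexp, integral_add hI0 hI2, integral_add (integrable_const _) hI1,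
        integral_const, integral_const_mul, integral_const_mul, hiu i]
      simp only [probReal_univ, measure_univ, ENNReal.toReal_one, smul_eq_mul, one_mul, mul_zero, add_zero]
      nlinarith [hiu2 i, sq_nonneg (d : ℝ)]
    have hpt : ∀ ω, ‖x - (EuclideanSpace.single (iS ω) ((d : ℝ) * tilde ω (iS ω)) :
        EuclideanSpace ℝ (Fin d))‖ ^ 2
        = ∑ i, (if iS ω = i then (1 : ℝ) else 0) * g i ω := by
      intro ω
      set k := iS ω with hk
      have hrhs : ∑ i, (if k = i then (1 : ℝ) else 0) * g i ω = g k ω := by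
        rw [Finset.sum_eq_single k]
        · simp
        · intro b _ hb; simp [Ne.symm hb]
        · intro h; exact absurd (Finset.mem_univ k) h
      rw [hrhs, hnormsq]
      have hterm : ∀ j : Fin d,
          ((x - (EuclideanSpace.single k ((d : ℝ) * tilde ω k) :
            EuclideanSpace ℝ (Fin d))) j) ^ 2
          = x j ^ 2 + (if j = k then (x k - (d : ℝ) * tilde ω k) ^ 2 - x k ^ 2 else 0) := by
        intro j
        have hsub : (x - (EuclideanSpace.single k ((d : ℝ) * tilde ω k) :
            EuclideanSpace ℝ (Fin d))) j
            = x j - (if j = k then (d : ℝ) * tilde ω k else 0) := by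
          simp [EuclideanSpace.single_apply]
        rw [hsub]
        by_cases h : j = k
        · subst h; simp
        · simp [h]
      calc ∑ j, ((x - (EuclideanSpace.single k ((d : ℝ) * tilde ω k) :
              EuclideanSpace ℝ (Fin d))) j) ^ 2
          = ∑ j, (x j ^ 2 + (if j = k then (x k - (d : ℝ) * tilde ω k) ^ 2 - x k ^ 2 else 0)) :=
            Finset.sum_congr rfl fun j _ => hterm j
        _ = (∑ j, x j ^ 2) + ((x k - (d : ℝ) * tilde ω k) ^ 2 - x k ^ 2) := by
            rw [Finset.sum_add_distrib, Finset.sum_ite_eq' Finset.univ k]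
            simp
        _ = g k ω := by rw [hg]; simp only; rw [← hnormsq x]; ring
    have hχg : ∀ i, Integrable (fun ω => (if iS ω = i then (1 : ℝ) else 0) * g i ω) μ := by
      intro i
      refine Integrable.bdd_mul (c := 1) (hgint i)
        (((measurable_of_countable (fun j : Fin d => if j = i then (1 : ℝ) else 0)).comp
          hmeas_iS).aestronglyMeasurable) ?_
      exact Filter.Eventually.of_forall fun ω => by by_cases h : iS ω = i <;> simp [h]
    have hsum : ∫ ω, ‖x - (EuclideanSpace.single (iS ω) ((d : ℝ) * tilde ω (iS ω)) :
        EuclideanSpace ℝ (Fin d))‖ ^ 2 ∂μ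
        = ∑ i, (1 / d : ℝ) * ∫ ω, g i ω ∂μ := by
      rw [integral_congr_ae (Filter.Eventually.of_forall hpt),
        integral_finset_sum _ (fun i _ => hχg i)]
      exact Finset.sum_congr rfl fun i _ =>
        key i (fun t => ‖x‖ ^ 2 - x i ^ 2 + (x i - (d : ℝ) * t i) ^ 2) (hψmeas i) (hgint i)
    rw [hsum]
    have hgI : ∀ i, ∫ ω, g i ω ∂μ
        ≤ ‖x‖ ^ 2 - x i ^ 2 + ((1 - (d : ℝ)) * x i) ^ 2 + (d : ℝ) ^ 2 * ε := by
      intro i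
      have heq : ∫ ω, g i ω ∂μ
          = (‖x‖ ^ 2 - x i ^ 2) + ∫ ω, (x i - (d : ℝ) * tilde ω i) ^ 2 ∂μ := by
        simp only [hg]
        rw [integral_add (integrable_const _) (hsqint i), integral_const]
        simp
      rw [heq]
      linarith [hsqbound i]
    calc ∑ i, (1 / d : ℝ) * ∫ ω, g i ω ∂μ
        ≤ ∑ i, ((1 / (d : ℝ)) * (‖x‖ ^ 2 + (d : ℝ) ^ 2 * ε)
            + (((1 - (d : ℝ)) ^ 2 - 1) / d) * x i ^ 2) := by
          apply Finset.sum_le_sum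
          intro i _
          have h := mul_le_mul_of_nonneg_left (hgI i)
            (le_of_lt (by positivity : (0 : ℝ) < 1 / d))
          calc (1 / d : ℝ) * ∫ ω, g i ω ∂μ
              ≤ (1 / d : ℝ) * (‖x‖ ^ 2 - x i ^ 2 + ((1 - (d : ℝ)) * x i) ^ 2
                  + (d : ℝ) ^ 2 * ε) := h
            _ = (1 / (d : ℝ)) * (‖x‖ ^ 2 + (d : ℝ) ^ 2 * ε)
                  + (((1 - (d : ℝ)) ^ 2 - 1) / d) * x i ^ 2 := by ring
      _ = (d : ℝ) * ((1 / (d : ℝ)) * (‖x‖ ^ 2 + (d : ℝ) ^ 2 * ε))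
            + (((1 - (d : ℝ)) ^ 2 - 1) / d) * ‖x‖ ^ 2 := by
          rw [Finset.sum_add_distrib, Finset.sum_const, ← Finset.mul_sum, ← hnormsq x]
          simp [Finset.card_univ, nsmul_eq_mul]
      _ ≤ 2 * d * ‖x‖ ^ 2 + (d : ℝ) ^ 2 * ε := by
          have hd1 : (1 : ℝ) ≤ d := by exact_mod_cast hd
          have h1 : (d : ℝ) * ((1 / (d : ℝ)) * (‖x‖ ^ 2 + (d : ℝ) ^ 2 * ε))
              = ‖x‖ ^ 2 + (d : ℝ) ^ 2 * ε := by field_simp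
          have h2 : (((1 - (d : ℝ)) ^ 2 - 1) / d) = (d : ℝ) - 2 := by
            field_simp; ring
          rw [h1, h2]
          nlinarith [sq_nonneg ‖x‖]
      _ = 2 * d * ‖x‖ ^ 2 + (d : ℝ) ^ 2 * (2 : ℝ) ^ (-(2 * p : ℤ)) * G ^ 2 := by
          rw [hεdef]; ring
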